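/- arXiv:2203.04233 — 5 statements merged into one kernel-verified Lean document; each statement's English description precedes it below -/
import Mathlib

section
/- Let V be a finite-dimensional real inner product space endowed with an r-fold vector cross product χ, and let R be an algebraic curvature operator on V. For an orthonormal (r−1)-tuple u = (u₁,…,u_{r−1}) in V, write E_u = span{u₁,…,u_{r−1}}, let P_u be the orthogonal projection of V onto E_u^⊥, and let J_u : V → V denote the map z ↦ χ(u₁,…,u_{r−1},z). Then the following are equivalent: (1) for every orthonormal (r−1)-tuple u, all w₁, w₂ ∈ E_u^⊥, all x ∈ E_u and all z ∈ E_u^⊥ one has ⟨(R(w₁,w₂) − R(J_u w₁, J_u w₂))x, z⟩ = 0 (i.e., R(w₁,w₂) − R(J_u w₁, J_u w₂) lies in 𝔰𝔬(E_u) ⊕ 𝔰𝔬(E_u^⊥)); (2) for every orthonormal (r−1)-tuple u, all w₃ ∈ E_u^⊥, all w₄ ∈ E_u and all z ∈ E_u^⊥ one has P_u(R(w₃,w₄)(J_u z)) = J_u(P_u(R(w₃,w₄)z)) (i.e., the orthogonal projection of R(w₃,w₄) to 𝔰𝔬(E_u^⊥) commutes with J_u restricted to E_u^⊥). -/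
open RealInnerProductSpace

variable {V : Type*} [NormedAddCommGroup V] [InnerProductSpace ℝ V]

/-- An `r`-fold vector cross product on a real inner product space: an alternating
multilinear map `χ` whose value is orthogonal to each of its arguments and whose
squared norm is the Gram determinant of the arguments. -/
def IsVCP {r : ℕ} (χ : AlternatingMap ℝ V V (Fin r)) : Prop :=
  (∀ v : Fin r → V, ∀ i : Fin r, ⟪χ v, v i⟫ = 0) ∧
  (∀ v : Fin r → V, ⟪χ v, χ v⟫ = (Matrix.of fun i j : Fin r => ⟪v i, v j⟫).det)

/-- An algebraic curvature operator: a bilinear map `V × V → End(V)` that is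
antisymmetric, takes skew-adjoint values, and satisfies the first Bianchi identity. -/
def IsAlgCurvature (R : V →ₗ[ℝ] V →ₗ[ℝ] V →ₗ[ℝ] V) : Prop :=
  (∀ x y, R x y = - R y x) ∧
  (∀ x y z w, ⟪R x y z, w⟫ = - ⟪R x y w, z⟫) ∧
  (∀ x y z, R x y z + R y z x + R z x y = 0)

/-- Orthogonal projection onto the orthogonal complement of the span of `S`. -/
noncomputable def projPerp [FiniteDimensional ℝ V] (S : Set V) (z : V) : V :=
  (Submodule.orthogonalProjection (Submodule.span ℝ S)ᗮ z : V)

/-- The constant-curvature operator `R^Id(x,y)z = ⟪y,z⟫ • x - ⟪x,z⟫ • y`. -/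
noncomputable def RId : V →ₗ[ℝ] V →ₗ[ℝ] V →ₗ[ℝ] V :=
  LinearMap.mk₂ ℝ
    (fun x y =>
      { toFun := fun z => ⟪y, z⟫ • x - ⟪x, z⟫ • y
        map_add' := fun a b => by simp only [inner_add_right, add_smul]; abel
        map_smul' := fun c a => by
          simp only [inner_smul_right, RingHom.id_apply, smul_sub, smul_smul] })
    (fun x x' y => by ext z; simp [inner_add_left, add_smul]; abel)
    (fun c x y => by ext z; simp [real_inner_smul_left, smul_sub, smul_smul, mul_comm])
    (fun x y y' => by ext z; simp [inner_add_left, add_smul]; abel)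
    (fun c x y => by ext z; simp [real_inner_smul_left, smul_sub, smul_smul, mul_comm])

/-- The first CR-integrability condition for an algebraic curvature operator `R`
with respect to an `(m+2)`-fold VCP `χ`: for every orthonormal `(m+2)`-tuple
`w = (w₁, …, w_r)` and every `z` orthogonal to `w₂, …, w_r`, the orthogonal
projection `P` onto `span{w₂,…,w_r}ᗮ` satisfies
`P (R(w₁,w₂) (χ(w₂,…,w_r,z))) = χ(w₂,…,w_r, P (R(w₁,w₂) z))`. -/
def FirstCR [FiniteDimensional ℝ V] {m : ℕ} (χ : AlternatingMap ℝ V V (Fin (m + 2)))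
    (R : V →ₗ[ℝ] V →ₗ[ℝ] V →ₗ[ℝ] V) : Prop :=
  ∀ w : Fin (m + 2) → V, Orthonormal ℝ w → ∀ z : V,
    (∀ i : Fin (m + 1), ⟪z, Fin.tail w i⟫ = 0) →
    projPerp (Set.range (Fin.tail w)) (R (w 0) (w 1) (χ (Fin.snoc (Fin.tail w) z))) =
      χ (Fin.snoc (Fin.tail w) (projPerp (Set.range (Fin.tail w)) (R (w 0) (w 1) z)))

section AuxHelpers

variable {V : Type*} [NormedAddCommGroup V] [InnerProductSpace ℝ V]

lemma aux_mem_orth {n : ℕ} (u : Fin n → V) {x : V} (h : ∀ i, ⟪u i, x⟫ = 0) :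
    x ∈ (Submodule.span ℝ (Set.range u))ᗮ := by
  rw [Submodule.mem_orthogonal]
  intro y hy
  induction hy using Submodule.span_induction with
  | mem y hy => obtain ⟨i, rfl⟩ := hy; exact h i
  | zero => simp
  | add a b _ _ ha hb => rw [inner_add_left, ha, hb]; ring
  | smul c a _ ha => rw [inner_smul_left]; simp [ha]

lemma aux_orth_inner {n : ℕ} (u : Fin n → V) {x : V}
    (hx : x ∈ (Submodule.span ℝ (Set.range u))ᗮ) (i : Fin n) : ⟪u i, x⟫ = 0 :=
  (Submodule.mem_orthogonal _ _).mp hx (u i) (Submodule.subset_span ⟨i, rfl⟩)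

lemma aux_projPerp_mem [FiniteDimensional ℝ V] (S : Set V) (z : V) :
    projPerp S z ∈ (Submodule.span ℝ S)ᗮ := (Submodule.orthogonalProjection _ z).2

lemma aux_inner_projPerp [FiniteDimensional ℝ V] (S : Set V) (z w : V)
    (hw : w ∈ (Submodule.span ℝ S)ᗮ) : ⟪projPerp S z, w⟫ = ⟪z, w⟫ := by
  have h := Submodule.sub_starProjection_mem_orthogonal (K := (Submodule.span ℝ S)ᗮ) z
  have h2 := (Submodule.mem_orthogonal _ _).mp h w hw
  rw [real_inner_comm] at h2
  have h3 : ⟪z - projPerp S z, w⟫ = 0 := h2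
  rw [inner_sub_left] at h3
  linarith

lemma aux_pair_symm (R : V →ₗ[ℝ] V →ₗ[ℝ] V →ₗ[ℝ] V) (hR : IsAlgCurvature R) (x y z w : V) :
    ⟪R x y z, w⟫ = ⟪R z w x, y⟫ := by
  obtain ⟨ha, hs, hb⟩ := hR
  have bi : ∀ a b c d : V, ⟪R a b c, d⟫ + ⟪R b c a, d⟫ + ⟪R c a b, d⟫ = 0 := by
    intro a b c d
    have h := congrArg (fun v => ⟪v, d⟫) (hb a b c)
    simpa [inner_add_left] using h
  have anti : ∀ a b c d : V, ⟪R a b c, d⟫ = - ⟪R b a c, d⟫ := by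
    intro a b c d; rw [ha a b]; simp
  have h1 := bi x y z w
  have h2 := bi y z w x
  have h3 := bi z w x y
  have h4 := bi w x y z
  have e1 := hs y z w x
  have e2 := hs z w y x
  have e3 := hs w y z x
  have e4 := hs w x y z
  have e5 := hs x y w z
  have e6 := hs y w x z
  have a1 := anti z w y x
  have a2 := anti w y z x
  have a3 := anti x y w z
  have a4 := anti y w x z
  have a5 := anti y z x w
  have a6 := anti z x y w
  have a7 := anti w x y z
  have a8 := anti x z w y
  have s1 := hs z x y w
  have s2 := hs x z w y
  have s3 := hs w x z y
  have s4 := hs y w z x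
  have s5 := hs x w y z
  linarith

section Jmaps

variable {m : ℕ} (χ : AlternatingMap ℝ V V (Fin (m+2))) (hχ : IsVCP χ) (u : Fin (m+1) → V)

lemma aux_snoc_add (z w : V) :
    χ (Fin.snoc u (z + w)) = χ (Fin.snoc u z) + χ (Fin.snoc u w) := by
  have h1 : ∀ x : V, (Fin.snoc u x : Fin (m+2) → V) =
      Function.update (Fin.snoc u 0) (Fin.last (m+1)) x := by
    intro x; simp [Fin.update_snoc_last]
  rw [h1 (z+w), h1 z, h1 w, χ.map_update_add]

include hχ

lemma aux_J_self (z : V) : ⟪χ (Fin.snoc u z), z⟫ = 0 := by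
  have := hχ.1 (Fin.snoc u z) (Fin.last (m+1))
  simpa [Fin.snoc_last] using this

lemma aux_J_skew (z w : V) : ⟪χ (Fin.snoc u z), w⟫ = - ⟪χ (Fin.snoc u w), z⟫ := by
  have h := aux_J_self χ hχ u (z + w)
  rw [aux_snoc_add] at h
  simp only [inner_add_left, inner_add_right] at h
  have hz := aux_J_self χ hχ u z
  have hw := aux_J_self χ hχ u w
  linarith

lemma aux_J_perp (z : V) (i : Fin (m+1)) : ⟪χ (Fin.snoc u z), u i⟫ = 0 := by
  have := hχ.1 (Fin.snoc u z) i.castSucc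
  simpa [Fin.snoc_castSucc] using this

lemma aux_J_mem (z : V) : χ (Fin.snoc u z) ∈ (Submodule.span ℝ (Set.range u))ᗮ :=
  aux_mem_orth u fun i => by rw [real_inner_comm]; exact aux_J_perp χ hχ u z i

lemma aux_J_norm_self (hu : Orthonormal ℝ u) {z : V} (hz : ∀ i, ⟪u i, z⟫ = 0) :
    ⟪χ (Fin.snoc u z), χ (Fin.snoc u z)⟫ = ⟪z, z⟫ := by
  rw [hχ.2]
  have key : (Matrix.of fun i j : Fin (m+2) =>
      (⟪(Fin.snoc u z : Fin (m+2) → V) i, (Fin.snoc u z : Fin (m+2) → V) j⟫ : ℝ)) =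
      Matrix.diagonal (fun i => if i = Fin.last (m+1) then ⟪z,z⟫ else (1:ℝ)) := by
    ext i j
    refine Fin.lastCases ?_ ?_ i
    · refine Fin.lastCases ?_ ?_ j
      · simp [Matrix.diagonal, Fin.snoc_last]
      · intro j'
        have : ⟪z, u j'⟫ = 0 := by rw [real_inner_comm]; exact hz j'
        simp [Matrix.diagonal, Fin.snoc_last, Fin.snoc_castSucc, this,
          (Fin.castSucc_lt_last j').ne']
    · intro i'
      refine Fin.lastCases ?_ ?_ j
      · simp [Matrix.diagonal, Fin.snoc_last, Fin.snoc_castSucc, hz i',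
          (Fin.castSucc_lt_last i').ne]
      · intro j'
        have horth := orthonormal_iff_ite.mp hu i' j'
        by_cases hij : i' = j'
        · subst hij
          simp [Matrix.diagonal, Fin.snoc_castSucc, horth, hu.1 i', (Fin.castSucc_lt_last i').ne]
        · have : i'.castSucc ≠ j'.castSucc := by simpa using hij
          simp [Matrix.diagonal, Fin.snoc_castSucc, horth, hij, this]
  rw [key, Matrix.det_diagonal, Fin.prod_univ_castSucc]
  have h1 : ∀ i : Fin (m+1), (if i.castSucc = Fin.last (m+1) then (⟪z,z⟫:ℝ) else 1) = 1 := by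
    intro i; simp [(Fin.castSucc_lt_last i).ne]
  simp [h1]

lemma aux_J_inner (hu : Orthonormal ℝ u) {z w : V}
    (hz : z ∈ (Submodule.span ℝ (Set.range u))ᗮ) (hw : w ∈ (Submodule.span ℝ (Set.range u))ᗮ) :
    ⟪χ (Fin.snoc u z), χ (Fin.snoc u w)⟫ = ⟪z, w⟫ := by
  have hzw : z + w ∈ (Submodule.span ℝ (Set.range u))ᗮ := Submodule.add_mem _ hz hw
  have h := aux_J_norm_self χ hχ u hu (fun i => aux_orth_inner u hzw i)
  rw [aux_snoc_add] at h
  simp only [inner_add_left, inner_add_right] at h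
  have h1 := aux_J_norm_self χ hχ u hu (fun i => aux_orth_inner u hz i)
  have h2 := aux_J_norm_self χ hχ u hu (fun i => aux_orth_inner u hw i)
  have c1 : ⟪χ (Fin.snoc u w), χ (Fin.snoc u z)⟫ = ⟪χ (Fin.snoc u z), χ (Fin.snoc u w)⟫ :=
    real_inner_comm _ _
  have c2 : (⟪w, z⟫ : ℝ) = ⟪z, w⟫ := real_inner_comm _ _
  linarith

lemma aux_J_sq (hu : Orthonormal ℝ u) {z : V}
    (hz : z ∈ (Submodule.span ℝ (Set.range u))ᗮ) :
    χ (Fin.snoc u (χ (Fin.snoc u z))) = - z := by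
  set v := χ (Fin.snoc u (χ (Fin.snoc u z))) + z with hv
  have hvmem : v ∈ (Submodule.span ℝ (Set.range u))ᗮ :=
    Submodule.add_mem _ (aux_J_mem χ hχ u _) hz
  have hkey : ∀ w ∈ (Submodule.span ℝ (Set.range u))ᗮ, ⟪v, w⟫ = 0 := by
    intro w hw
    have h1 : ⟪χ (Fin.snoc u (χ (Fin.snoc u z))), w⟫ = - ⟪χ (Fin.snoc u w), χ (Fin.snoc u z)⟫ :=
      aux_J_skew χ hχ u _ w
    have h2 : ⟪χ (Fin.snoc u w), χ (Fin.snoc u z)⟫ = ⟪w, z⟫ := aux_J_inner χ hχ u hu hw hz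
    have h3 : (⟪w, z⟫ : ℝ) = ⟪z, w⟫ := real_inner_comm _ _
    rw [hv, inner_add_left, h1, h2, h3]
    ring
  have hv0 : v = 0 := inner_self_eq_zero.mp (hkey v hvmem)
  exact eq_neg_of_add_eq_zero_left hv0

end Jmaps

end AuxHelpers

/-- For an algebraic curvature operator `R` on a space with an `(m+2)`-fold VCP `χ`,
the following are equivalent: (1) for every orthonormal `(r-1)`-tuple `u`, all
`w₁, w₂ ∈ E_uᗮ`, all `x ∈ E_u` and `z ∈ E_uᗮ`,
`⟪(R(w₁,w₂) - R(J_u w₁, J_u w₂)) x, z⟫ = 0` (where `J_u z = χ(u₁,…,u_{r-1},z)`);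
(2) for every such `u`, all `w₃ ∈ E_uᗮ`, `w₄ ∈ E_u` and `z ∈ E_uᗮ`,
`P_u (R(w₃,w₄) (J_u z)) = J_u (P_u (R(w₃,w₄) z))`. -/
theorem firstCR_equiv_conditions {V : Type*} [NormedAddCommGroup V] [InnerProductSpace ℝ V]
    [FiniteDimensional ℝ V] {m : ℕ}
    (χ : AlternatingMap ℝ V V (Fin (m + 2))) (hχ : IsVCP χ)
    (R : V →ₗ[ℝ] V →ₗ[ℝ] V →ₗ[ℝ] V) (hR : IsAlgCurvature R) :
    (∀ u : Fin (m + 1) → V, Orthonormal ℝ u →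
      ∀ w₁ ∈ (Submodule.span ℝ (Set.range u))ᗮ, ∀ w₂ ∈ (Submodule.span ℝ (Set.range u))ᗮ,
      ∀ x ∈ Submodule.span ℝ (Set.range u), ∀ z ∈ (Submodule.span ℝ (Set.range u))ᗮ,
        ⟪(R w₁ w₂ - R (χ (Fin.snoc u w₁)) (χ (Fin.snoc u w₂))) x, z⟫ = 0) ↔
    (∀ u : Fin (m + 1) → V, Orthonormal ℝ u →
      ∀ w₃ ∈ (Submodule.span ℝ (Set.range u))ᗮ, ∀ w₄ ∈ Submodule.span ℝ (Set.range u),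
      ∀ z ∈ (Submodule.span ℝ (Set.range u))ᗮ,
        projPerp (Set.range u) (R w₃ w₄ (χ (Fin.snoc u z))) =
          χ (Fin.snoc u (projPerp (Set.range u) (R w₃ w₄ z)))) := by
  obtain ⟨hanti, hskew, hbianchi⟩ := hR
  have hRfull : IsAlgCurvature R := ⟨hanti, hskew, hbianchi⟩
  have hneg1 : ∀ a b c d : V, ⟪R (-a) b c, d⟫ = - ⟪R a b c, d⟫ := by
    intro a b c d
    rw [map_neg R a]
    simp
  have hanti' : ∀ a b c d : V, ⟪R a b c, d⟫ = - ⟪R b a c, d⟫ := by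
    intro a b c d; rw [hanti a b]; simp
  constructor
  · intro H u hu w₃ hw₃ w₄ hw₄ z hz
    have H' : ∀ w₁ ∈ (Submodule.span ℝ (Set.range u))ᗮ, ∀ w₂ ∈ (Submodule.span ℝ (Set.range u))ᗮ,
        ∀ x ∈ Submodule.span ℝ (Set.range u), ∀ ζ ∈ (Submodule.span ℝ (Set.range u))ᗮ,
        ⟪R w₁ w₂ x, ζ⟫ = ⟪R (χ (Fin.snoc u w₁)) (χ (Fin.snoc u w₂)) x, ζ⟫ := by
      intro w₁ h₁ w₂ h₂ x hx ζ hζ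
      have h := H u hu w₁ h₁ w₂ h₂ x hx ζ hζ
      rw [LinearMap.sub_apply, inner_sub_left, sub_eq_zero] at h
      exact h
    set a := projPerp (Set.range u) (R w₃ w₄ (χ (Fin.snoc u z))) with ha
    set b := χ (Fin.snoc u (projPerp (Set.range u) (R w₃ w₄ z))) with hb
    have hamem : a ∈ (Submodule.span ℝ (Set.range u))ᗮ := aux_projPerp_mem _ _
    have hbmem : b ∈ (Submodule.span ℝ (Set.range u))ᗮ := aux_J_mem χ hχ u _
    have key : ∀ w ∈ (Submodule.span ℝ (Set.range u))ᗮ, ⟪a - b, w⟫ = 0 := by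
      intro w hw
      have hJw : χ (Fin.snoc u w) ∈ (Submodule.span ℝ (Set.range u))ᗮ := aux_J_mem χ hχ u w
      have hJz : χ (Fin.snoc u z) ∈ (Submodule.span ℝ (Set.range u))ᗮ := aux_J_mem χ hχ u z
      have hAa : ⟪a, w⟫ = ⟪R w₃ w₄ (χ (Fin.snoc u z)), w⟫ := aux_inner_projPerp _ _ _ hw
      have hBb : ⟪b, w⟫ = - ⟪R w₃ w₄ z, χ (Fin.snoc u w)⟫ := by
        rw [hb, aux_J_skew χ hχ u _ w]
        congr 1
        rw [real_inner_comm]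
        exact aux_inner_projPerp _ _ _ hJw
      -- main computation
      have c1 : ⟪R w₃ w₄ (χ (Fin.snoc u z)), w⟫ = ⟪R (χ (Fin.snoc u z)) w w₃, w₄⟫ :=
        aux_pair_symm R hRfull _ _ _ _
      have c2 : ⟪R (χ (Fin.snoc u z)) w w₃, w₄⟫ = - ⟪R (χ (Fin.snoc u z)) w w₄, w₃⟫ :=
        hskew _ _ _ _
      have c3 : ⟪R (χ (Fin.snoc u z)) w w₄, w₃⟫ =
          ⟪R (χ (Fin.snoc u (χ (Fin.snoc u z)))) (χ (Fin.snoc u w)) w₄, w₃⟫ :=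
        H' _ hJz _ hw _ hw₄ _ hw₃
      have c4 : ⟪R (χ (Fin.snoc u (χ (Fin.snoc u z)))) (χ (Fin.snoc u w)) w₄, w₃⟫ =
          - ⟪R z (χ (Fin.snoc u w)) w₄, w₃⟫ := by
        rw [aux_J_sq χ hχ u hu hz]
        exact hneg1 _ _ _ _
      have c5 : ⟪R w₃ w₄ z, χ (Fin.snoc u w)⟫ = ⟪R z (χ (Fin.snoc u w)) w₃, w₄⟫ :=
        aux_pair_symm R hRfull _ _ _ _
      have c6 : ⟪R z (χ (Fin.snoc u w)) w₃, w₄⟫ = - ⟪R z (χ (Fin.snoc u w)) w₄, w₃⟫ :=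
        hskew _ _ _ _
      rw [inner_sub_left, hAa, hBb]
      linarith
    have hd : a - b = 0 :=
      inner_self_eq_zero.mp (key (a - b) (Submodule.sub_mem _ hamem hbmem))
    exact sub_eq_zero.mp hd
  · intro H u hu w₁ hw₁ w₂ hw₂ x hx z hz
    have key : ∀ w₃ ∈ (Submodule.span ℝ (Set.range u))ᗮ, ∀ w₄ ∈ Submodule.span ℝ (Set.range u),
        ∀ p ∈ (Submodule.span ℝ (Set.range u))ᗮ, ∀ q ∈ (Submodule.span ℝ (Set.range u))ᗮ,
        ⟪R w₃ w₄ (χ (Fin.snoc u p)), q⟫ = - ⟪R w₃ w₄ p, χ (Fin.snoc u q)⟫ := by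
      intro w₃ hw₃ w₄ hw₄ p hp q hq
      have h := H u hu w₃ hw₃ w₄ hw₄ p hp
      have hJq : χ (Fin.snoc u q) ∈ (Submodule.span ℝ (Set.range u))ᗮ := aux_J_mem χ hχ u q
      have h2 := congrArg (fun v => (⟪v, q⟫ : ℝ)) h
      rw [aux_inner_projPerp _ _ _ hq, aux_J_skew χ hχ u _ q] at h2
      rw [h2]
      congr 1
      rw [real_inner_comm]
      exact aux_inner_projPerp _ _ _ hJq
    rw [LinearMap.sub_apply, inner_sub_left, sub_eq_zero]
    have hJw₁ : χ (Fin.snoc u w₁) ∈ (Submodule.span ℝ (Set.range u))ᗮ := aux_J_mem χ hχ u w₁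
    have c1 : ⟪R (χ (Fin.snoc u w₁)) (χ (Fin.snoc u w₂)) x, z⟫ =
        ⟪R x z (χ (Fin.snoc u w₁)), χ (Fin.snoc u w₂)⟫ := aux_pair_symm R hRfull _ _ _ _
    have c2 : ⟪R x z (χ (Fin.snoc u w₁)), χ (Fin.snoc u w₂)⟫ =
        - ⟪R z x (χ (Fin.snoc u w₁)), χ (Fin.snoc u w₂)⟫ := hanti' _ _ _ _
    have c3 : ⟪R z x (χ (Fin.snoc u w₁)), χ (Fin.snoc u w₂)⟫ =
        - ⟪R z x w₁, χ (Fin.snoc u (χ (Fin.snoc u w₂)))⟫ :=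
      key z hz x hx w₁ hw₁ _ (aux_J_mem χ hχ u w₂)
    have c4 : ⟪R z x w₁, χ (Fin.snoc u (χ (Fin.snoc u w₂)))⟫ = - ⟪R z x w₁, w₂⟫ := by
      rw [aux_J_sq χ hχ u hu hw₂, inner_neg_right]
    have c5 : ⟪R w₁ w₂ x, z⟫ = ⟪R x z w₁, w₂⟫ := aux_pair_symm R hRfull _ _ _ _
    have c6 : ⟪R x z w₁, w₂⟫ = - ⟪R z x w₁, w₂⟫ := hanti' _ _ _ _
    linarith
end

section
/- Let V be a finite-dimensional real inner product space endowed with an r-fold vector cross product χ, and let R be an algebraic curvature operator on V such that R(x,y)z = 0 whenever ⟨z,x⟩ = ⟨z,y⟩ = 0 (i.e., R(x,y) ∈ 𝔰𝔬(span{x,y}) for all x,y ∈ V). Then for every orthonormal (r−1)-tuple u = (u₁,…,u_{r−1}) with E_u = span{u₁,…,u_{r−1}}, every w₃ ∈ E_u^⊥, every w₄ ∈ E_u and every z ∈ E_u^⊥, one has P_u(R(w₃,w₄)(χ(u₁,…,u_{r−1},z))) = χ(u₁,…,u_{r−1}, P_u(R(w₃,w₄)z)), where P_u is the orthogonal projection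 of V onto E_u^⊥. -/
open RealInnerProductSpace

variable {V : Type*} [NormedAddCommGroup V] [InnerProductSpace ℝ V]

private theorem aux_flat' {V : Type*} [NormedAddCommGroup V] [InnerProductSpace ℝ V]
    (R : V →ₗ[ℝ] V →ₗ[ℝ] V →ₗ[ℝ] V)
    (hskew : ∀ x y z w : V, ⟪R x y z, w⟫ = - ⟪R x y w, z⟫)
    (hflat : ∀ x y z : V, ⟪z, x⟫ = 0 → ⟪z, y⟫ = 0 → R x y z = 0)
    (K : Submodule ℝ V) (w₃ : V) (hw₃ : w₃ ∈ Kᗮ) (w₄ : V) (hw₄ : w₄ ∈ K) :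
    ∀ v ∈ Kᗮ, R w₃ w₄ v ∈ Kᗮᗮ := by
  have hdecomp : ∀ s, s ∈ Kᗮ →
      R w₃ w₄ s = (⟪s, w₃⟫ / ⟪w₃, w₃⟫) • R w₃ w₄ w₃ := by
    intro s hs
    set c := ⟪s, w₃⟫ / ⟪w₃, w₃⟫ with hc
    have h1 : ⟪s - c • w₃, w₃⟫ = 0 := by
      by_cases hw : w₃ = 0
      · simp [hw]
      · have hne : ⟪w₃, w₃⟫ ≠ 0 := by
          simpa [inner_self_eq_zero] using hw
        rw [inner_sub_left, real_inner_smul_left, hc, div_mul_cancel₀ _ hne, sub_self]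
    have h2 : ⟪s - c • w₃, w₄⟫ = 0 := by
      have hs4 : ⟪s, w₄⟫ = 0 := by
        rw [real_inner_comm]; exact Submodule.inner_right_of_mem_orthogonal hw₄ hs
      have hw34 : ⟪w₃, w₄⟫ = 0 := by
        rw [real_inner_comm]; exact Submodule.inner_right_of_mem_orthogonal hw₄ hw₃
      rw [inner_sub_left, real_inner_smul_left, hs4, hw34, mul_zero, sub_zero]
    have h0 := hflat w₃ w₄ (s - c • w₃) h1 h2
    have : R w₃ w₄ s - c • R w₃ w₄ w₃ = 0 := by
      simpa [map_sub, map_smul] using h0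
    linear_combination (norm := module) this
  intro v hv
  rw [Submodule.mem_orthogonal]
  intro t ht
  rw [hdecomp v hv, inner_smul_right]
  have hkey : ⟪t, R w₃ w₄ w₃⟫ = 0 := by
    set c := ⟪t, w₃⟫ / ⟪w₃, w₃⟫ with hc
    have h1 : ⟪t - c • w₃, w₃⟫ = 0 := by
      by_cases hw : w₃ = 0
      · simp [hw]
      · have hne : ⟪w₃, w₃⟫ ≠ 0 := by
          simpa [inner_self_eq_zero] using hw
        rw [inner_sub_left, real_inner_smul_left, hc, div_mul_cancel₀ _ hne, sub_self]
    have h2 : ⟪t - c • w₃, w₄⟫ = 0 := by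
      have hs4 : ⟪t, w₄⟫ = 0 := by
        rw [real_inner_comm]; exact Submodule.inner_right_of_mem_orthogonal hw₄ ht
      have hw34 : ⟪w₃, w₄⟫ = 0 := by
        rw [real_inner_comm]; exact Submodule.inner_right_of_mem_orthogonal hw₄ hw₃
      rw [inner_sub_left, real_inner_smul_left, hs4, hw34, mul_zero, sub_zero]
    have h0 := hflat w₃ w₄ (t - c • w₃) h1 h2
    have ht' : ⟪t - c • w₃, R w₃ w₄ w₃⟫ = 0 := by
      rw [real_inner_comm, hskew w₃ w₄ w₃ (t - c • w₃), h0]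
      simp
    have hw3 : ⟪w₃, R w₃ w₄ w₃⟫ = 0 := by
      have := hskew w₃ w₄ w₃ w₃
      have h3 : ⟪R w₃ w₄ w₃, w₃⟫ = 0 := by linarith
      rw [real_inner_comm]; exact h3
    have heq : ⟪t, R w₃ w₄ w₃⟫ = ⟪t - c • w₃, R w₃ w₄ w₃⟫ + c * ⟪w₃, R w₃ w₄ w₃⟫ := by
      rw [inner_sub_left, real_inner_smul_left]; ring
    rw [heq, ht', hw3]; ring
  rw [hkey]; ring

/-- If an algebraic curvature operator `R` on a space with an `(m+2)`-fold VCP `χ`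
satisfies `R(x,y)z = 0` whenever `z ⊥ x` and `z ⊥ y`, then for every orthonormal
`(r-1)`-tuple `u`, every `w₃ ∈ E_uᗮ`, `w₄ ∈ E_u` and `z ∈ E_uᗮ`,
`P_u (R(w₃,w₄) (χ(u₁,…,u_{r-1},z))) = χ(u₁,…,u_{r-1}, P_u (R(w₃,w₄) z))`. -/
theorem flat_curvature_satisfies_commutation {V : Type*} [NormedAddCommGroup V]
    [InnerProductSpace ℝ V] [FiniteDimensional ℝ V] {m : ℕ}
    (χ : AlternatingMap ℝ V V (Fin (m + 2))) (hχ : IsVCP χ)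
    (R : V →ₗ[ℝ] V →ₗ[ℝ] V →ₗ[ℝ] V) (hR : IsAlgCurvature R)
    (hflat : ∀ x y z : V, ⟪z, x⟫ = 0 → ⟪z, y⟫ = 0 → R x y z = 0) :
    ∀ u : Fin (m + 1) → V, Orthonormal ℝ u →
      ∀ w₃ ∈ (Submodule.span ℝ (Set.range u))ᗮ, ∀ w₄ ∈ Submodule.span ℝ (Set.range u),
      ∀ z ∈ (Submodule.span ℝ (Set.range u))ᗮ,
        projPerp (Set.range u) (R w₃ w₄ (χ (Fin.snoc u z))) =
          χ (Fin.snoc u (projPerp (Set.range u) (R w₃ w₄ z))) := by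
  intro u hu w₃ hw₃ w₄ hw₄ z hz
  set K := Submodule.span ℝ (Set.range u) with hK
  have haux := aux_flat' R hR.2.1 hflat K w₃ hw₃ w₄ hw₄
  have hproj0 : ∀ v ∈ Kᗮ, projPerp (Set.range u) (R w₃ w₄ v) = 0 := by
    intro v hv
    have := Submodule.orthogonalProjectionOnto_apply_of_mem_orthogonal (haux v hv)
    show (↑((Submodule.orthogonalProjection Kᗮ) (R w₃ w₄ v)) : V) = 0
    rw [this, Submodule.coe_zero]
  have hχmem : χ (Fin.snoc u z) ∈ Kᗮ := by
    rw [Submodule.mem_orthogonal]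
    intro x hx
    induction hx using Submodule.span_induction with
    | mem x hx =>
      obtain ⟨i, rfl⟩ := hx
      have h := (hχ.1 (Fin.snoc u z) i.castSucc)
      rw [Fin.snoc_castSucc] at h
      rw [real_inner_comm]; exact h
    | zero => simp
    | add x y _ _ hx hy => rw [inner_add_left, hx, hy, add_zero]
    | smul c x _ hx => rw [real_inner_smul_left, hx, mul_zero]
  rw [hproj0 _ hχmem, hproj0 _ hz]
  have hz0 : χ (Fin.snoc u (0 : V)) = 0 := by
    have e : (Fin.snoc u (0 : V) : Fin (m + 2) → V) =
        (Function.update (Fin.snoc u z : Fin (m + 2) → V) (Fin.last (m + 1)) (0 : V)) :=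
      (Fin.update_snoc_last (α := fun _ : Fin (m + 2) => V) z u (0 : V)).symm
    rw [e]
    exact χ.map_update_zero _ _
  rw [hz0]
end

section
/- Let V be an 8-dimensional real inner product space endowed with a 3-fold vector cross product χ, and let R be an algebraic curvature operator on V satisfying the first CR-integrability condition associated with χ (i.e., for every orthonormal triple (w₁,w₂,w₃) in V and every z ∈ V orthogonal to both w₂ and w₃ one has P(R(w₁,w₂)(χ(w₂,w₃,z))) = χ(w₂,w₃, P(R(w₁,w₂)z)), where P is the orthogonal projection of V onto span{w₂,w₃}^⊥). Then for all x, y ∈ V: R(x,y)z = 0 whenever z is orthogonal to both x and y, and R(x,y) maps span{x,y} into itself (i.e., R(x,y) ∈ 𝔰𝔬(E_{x∧y}) for every oriented 2-plane E_{x∧y}). -/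
open RealInnerProductSpace

variable {V : Type*} [NormedAddCommGroup V] [InnerProductSpace ℝ V]

section VCPProof

variable {V : Type*} [NormedAddCommGroup V] [InnerProductSpace ℝ V]
variable {χ : AlternatingMap ℝ V V (Fin 3)}

private lemma chi_orth0 (hχ : IsVCP χ) (x y z : V) : ⟪χ ![x,y,z], x⟫ = 0 := by
  simpa using hχ.1 ![x,y,z] 0

private lemma chi_orth1 (hχ : IsVCP χ) (x y z : V) : ⟪χ ![x,y,z], y⟫ = 0 := by
  simpa using hχ.1 ![x,y,z] 1

private lemma chi_orth2 (hχ : IsVCP χ) (x y z : V) : ⟪χ ![x,y,z], z⟫ = 0 := by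
  simpa using hχ.1 ![x,y,z] 2

private lemma chi_add2 (χ : AlternatingMap ℝ V V (Fin 3)) (x y z z' : V) :
    χ ![x,y,z+z'] = χ ![x,y,z] + χ ![x,y,z'] := by
  have h := χ.toMultilinearMap.map_update_add ![x,y,z] 2 z z'
  simp only [AlternatingMap.coe_multilinearMap] at h
  have e : ∀ w : V, Function.update ![x,y,z] 2 w = ![x,y,w] := by
    intro w; funext i; fin_cases i <;> simp
  rwa [e, e, e] at h

private lemma chi_swap12 (χ : AlternatingMap ℝ V V (Fin 3)) (x y z : V) :
    χ ![x,z,y] = - χ ![x,y,z] := by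
  have h := χ.map_swap ![x,y,z] (i := 1) (j := 2) (by decide)
  have e : ![x,y,z] ∘ Equiv.swap (1:Fin 3) 2 = ![x,z,y] := by
    funext i; fin_cases i <;> simp [Equiv.swap_apply_def]
  rwa [e] at h

/-- polarization of the orthogonality axiom in the last slot -/
private lemma chi_pair (hχ : IsVCP χ) (x y z w : V) :
    ⟪χ ![x,y,z], w⟫ = - ⟪χ ![x,y,w], z⟫ := by
  have h := hχ.1 ![x,y,z+w] 2
  simp only [Matrix.cons_val_two, Matrix.tail_cons, Matrix.head_cons] at h
  rw [chi_add2] at h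
  rw [inner_add_left, inner_add_right, inner_add_right] at h
  rw [chi_orth2 hχ x y z, chi_orth2 hχ x y w] at h
  linarith

private lemma chi_norm (hχ : IsVCP χ) {b c : V} (hb : ‖b‖ = 1) (hc : ‖c‖ = 1)
    (hbc : ⟪b,c⟫ = 0) {z : V} (hzb : ⟪z,b⟫ = 0) (hzc : ⟪z,c⟫ = 0) :
    ⟪χ ![b,c,z], χ ![b,c,z]⟫ = ⟪z,z⟫ := by
  have h := hχ.2 ![b,c,z]
  rw [Matrix.det_fin_three] at h
  simp only [Matrix.of_apply, Matrix.cons_val', Matrix.cons_val_zero, Matrix.cons_val_one,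
    Matrix.head_cons, Matrix.empty_val', Matrix.cons_val_fin_one, Matrix.head_fin_const,
    Matrix.cons_val_two, Matrix.tail_cons] at h
  have hbb : ⟪b,b⟫ = (1:ℝ) := by rw [real_inner_self_eq_norm_sq, hb]; norm_num
  have hcc : ⟪c,c⟫ = (1:ℝ) := by rw [real_inner_self_eq_norm_sq, hc]; norm_num
  have hcb : ⟪c,b⟫ = (0:ℝ) := by rw [real_inner_comm]; exact hbc
  have hbz : ⟪b,z⟫ = (0:ℝ) := by rw [real_inner_comm]; exact hzb
  have hcz : ⟪c,z⟫ = (0:ℝ) := by rw [real_inner_comm]; exact hzc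
  rw [h, hbb, hcc, hbc, hcb, hbz, hcz, hzb, hzc]
  ring

private lemma norm_one_of_inner_one {x : V} (h : ⟪x,x⟫ = 1) : ‖x‖ = 1 := by
  have h2 : ‖x‖ * ‖x‖ = 1 := by rw [← real_inner_self_eq_norm_mul_norm, h]
  nlinarith [norm_nonneg x]

/-- `J² = -1` on `{b,c}ᗮ` for orthonormal `b,c`. -/
private lemma chi_sq (hχ : IsVCP χ) {b c : V} (hb : ‖b‖ = 1) (hc : ‖c‖ = 1)
    (hbc : ⟪b,c⟫ = 0) {z : V} (hzb : ⟪z,b⟫ = 0) (hzc : ⟪z,c⟫ = 0) :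
    χ ![b,c,χ ![b,c,z]] = - z := by
  set u := χ ![b,c,z] with hu
  have hub : ⟪u,b⟫ = 0 := chi_orth0 hχ b c z
  have huc : ⟪u,c⟫ = 0 := chi_orth1 hχ b c z
  have huu : ⟪u,u⟫ = ⟪z,z⟫ := chi_norm hχ hb hc hbc hzb hzc
  have hJu : ⟪χ ![b,c,u], χ ![b,c,u]⟫ = ⟪z,z⟫ := by
    rw [chi_norm hχ hb hc hbc hub huc, huu]
  have hcross : ⟪χ ![b,c,u], z⟫ = - ⟪z,z⟫ := by
    rw [chi_pair hχ b c u z, ← hu, huu]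
  have hcross' : ⟪z, χ ![b,c,u]⟫ = - ⟪z,z⟫ := by rw [real_inner_comm]; exact hcross
  have hzero : ⟪χ ![b,c,u] + z, χ ![b,c,u] + z⟫ = 0 := by
    rw [inner_add_left, inner_add_right, inner_add_right, hJu, hcross, hcross']; ring
  exact eq_neg_of_add_eq_zero_left (inner_self_eq_zero.mp hzero)

end VCPProof

section CondC

variable {V : Type*} [NormedAddCommGroup V] [InnerProductSpace ℝ V]
variable {χ : AlternatingMap ℝ V V (Fin 3)}

private lemma exists_unit_perp [FiniteDimensional ℝ V] (h8 : Module.finrank ℝ V = 8)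
    (u : Fin 6 → V) : ∃ c : V, ‖c‖ = 1 ∧ ∀ i, ⟪c, u i⟫ = 0 := by
  classical
  have hdim : Module.finrank ℝ (Submodule.span ℝ (Set.range u)) ≤ 6 := by
    have h1 := finrank_span_le_card (R := ℝ) (Set.range u)
    have h2 : (Set.range u).toFinset.card ≤ 6 := by
      rw [Set.toFinset_range]
      exact le_trans Finset.card_image_le (by simp)
    omega
  have horth : (Submodule.span ℝ (Set.range u))ᗮ ≠ ⊥ := by
    intro hbot
    have h := Submodule.finrank_add_finrank_orthogonal
      (K := Submodule.span ℝ (Set.range u))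
    rw [hbot] at h
    simp [h8] at h
    omega
  obtain ⟨c0, hc0K, hc0⟩ := Submodule.exists_mem_ne_zero_of_ne_bot horth
  refine ⟨‖c0‖⁻¹ • c0, ?_, ?_⟩
  · simp [norm_smul, inv_mul_cancel₀ (norm_ne_zero_iff.mpr hc0)]
  · intro i
    rw [real_inner_smul_left]
    have h0 : ⟪u i, c0⟫ = 0 := (Submodule.mem_orthogonal _ c0).mp hc0K (u i)
      (Submodule.subset_span ⟨i, rfl⟩)
    rw [real_inner_comm, h0, mul_zero]

private lemma mem_orth_pair {b c v : V} (h1 : ⟪v,b⟫ = 0) (h2 : ⟪v,c⟫ = 0) :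
    v ∈ (Submodule.span ℝ ({b,c} : Set V))ᗮ := by
  rw [Submodule.mem_orthogonal]
  intro u hu
  induction hu using Submodule.span_induction with
  | mem u hu =>
      rcases hu with rfl | rfl
      · rw [real_inner_comm]; exact h1
      · rw [real_inner_comm]; simpa using h2
  | zero => simp
  | add u w _ _ hu hw => rw [inner_add_left, hu, hw]; ring
  | smul t u _ hu => rw [inner_smul_left, hu]; ring

private lemma projPerp_pair [FiniteDimensional ℝ V] {b c : V} (u v : V)
    (h1 : ⟪v,b⟫ = 0) (h2 : ⟪v,c⟫ = 0) :
    ⟪projPerp ({b,c} : Set V) u, v⟫ = ⟪u, v⟫ := by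
  have hv : v ∈ (Submodule.span ℝ ({b,c} : Set V))ᗮ := mem_orth_pair h1 h2
  have h := Submodule.sub_starProjection_mem_orthogonal
    (K := (Submodule.span ℝ ({b,c} : Set V))ᗮ) u
  have h3 : ⟪u - (Submodule.orthogonalProjection (Submodule.span ℝ ({b,c} : Set V))ᗮ u : V), v⟫ = 0 :=
    Submodule.inner_left_of_mem_orthogonal hv h
  rw [inner_sub_left] at h3
  unfold projPerp
  linarith

private lemma snoc_pair (b c z : V) : Fin.snoc ![b,c] z = ![b,c,z] := by
  funext i; fin_cases i <;> simp [Fin.snoc] <;> rfl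

private lemma tail_triple (a b c : V) : Fin.tail ![a,b,c] = ![b,c] := by
  funext i; fin_cases i <;> simp [Fin.tail]

private lemma range_pair (b c : V) : Set.range ![b,c] = ({b, c} : Set V) := by
  rw [Matrix.range_cons, Matrix.range_cons, Matrix.range_empty]
  ext u; simp; tauto

/-- the clean form of the first CR-integrability condition -/
private lemma condC [FiniteDimensional ℝ V] (hχ : IsVCP χ)
    {R : V →ₗ[ℝ] V →ₗ[ℝ] V →ₗ[ℝ] V} (hCR : FirstCR (m := 1) χ R)
    {a b c : V} (ha : ‖a‖ = 1) (hb : ‖b‖ = 1) (hc : ‖c‖ = 1)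
    (hab : ⟪a,b⟫ = 0) (hac : ⟪a,c⟫ = 0) (hbc : ⟪b,c⟫ = 0)
    {z v : V} (hzb : ⟪z,b⟫ = 0) (hzc : ⟪z,c⟫ = 0)
    (hvb : ⟪v,b⟫ = 0) (hvc : ⟪v,c⟫ = 0) :
    ⟪R a b (χ ![b,c,z]), v⟫ + ⟪R a b z, χ ![b,c,v]⟫ = 0 := by
  have hON : Orthonormal ℝ ![a,b,c] := by
    constructor
    · intro i; fin_cases i <;> simpa using (by assumption : _)
    · intro i j hij
      fin_cases i <;> fin_cases j <;>
        simp_all [real_inner_comm a b, real_inner_comm a c, real_inner_comm b c]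
  have h := hCR ![a,b,c] hON z ?hz
  case hz =>
    intro i
    rw [tail_triple]
    fin_cases i <;> simpa using (by assumption : _)
  rw [tail_triple, range_pair, snoc_pair, snoc_pair] at h
  simp only [Matrix.cons_val_zero, Matrix.cons_val_one, Matrix.head_cons] at h
  -- h : projPerp {b,c} (R a b (χ ![b,c,z])) = χ ![b,c, projPerp {b,c} (R a b z)]
  have lhs : ⟪projPerp ({b,c} : Set V) (R a b (χ ![b,c,z])), v⟫
      = ⟪R a b (χ ![b,c,z]), v⟫ := projPerp_pair _ _ hvb hvc
  have rhs : ⟪χ ![b,c, projPerp ({b,c} : Set V) (R a b z)], v⟫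
      = - ⟪R a b z, χ ![b,c,v]⟫ := by
    rw [chi_pair hχ]
    have : ⟪χ ![b,c,v], projPerp ({b,c} : Set V) (R a b z)⟫
        = ⟪χ ![b,c,v], R a b z⟫ := by
      rw [real_inner_comm (projPerp ({b,c} : Set V) (R a b z)) (χ ![b,c,v]),
        real_inner_comm (R a b z) (χ ![b,c,v])]
      exact projPerp_pair _ _ (chi_orth0 hχ b c v) (chi_orth1 hχ b c v)
    rw [this, real_inner_comm]
  rw [h] at lhs
  rw [rhs] at lhs
  linarith

end CondC

section Core

variable {V : Type*} [NormedAddCommGroup V] [InnerProductSpace ℝ V]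
variable {χ : AlternatingMap ℝ V V (Fin 3)}

private lemma chain_lemma (hχ : IsVCP χ) (b c z w : V) :
    ⟪χ ![b,c,z], w⟫ = ⟪c, χ ![b,z,w]⟫ := by
  rw [chi_pair hχ b c z w, chi_swap12 χ b w c, inner_neg_left,
    chi_pair hχ b w c z, chi_swap12 χ b z w, inner_neg_left,
    real_inner_comm c (χ ![b,z,w])]
  ring

private lemma caseA [FiniteDimensional ℝ V] (h8 : Module.finrank ℝ V = 8) (hχ : IsVCP χ)
    {R : V →ₗ[ℝ] V →ₗ[ℝ] V →ₗ[ℝ] V} {a b : V}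
    (hskew : ∀ z w : V, ⟪R a b z, w⟫ = - ⟪R a b w, z⟫)
    (hcond : ∀ c : V, ‖c‖ = 1 → ⟪a,c⟫ = 0 → ⟪b,c⟫ = 0 → ∀ z v : V,
      ⟪z,b⟫ = 0 → ⟪z,c⟫ = 0 → ⟪v,b⟫ = 0 → ⟪v,c⟫ = 0 →
      ⟪R a b (χ ![b,c,z]), v⟫ + ⟪R a b z, χ ![b,c,v]⟫ = 0)
    (hb : ‖b‖ = 1)
    {z v : V} (hz : ‖z‖ = 1) (hv : ‖v‖ = 1) (hzb : ⟪z,b⟫ = 0)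
    (hva : ⟪v,a⟫ = 0) (hvb : ⟪v,b⟫ = 0) :
    ⟪R a b z, v⟫ = 0 := by
  obtain ⟨c, hc1, hcp⟩ := exists_unit_perp h8 ![a, b, z, v, χ ![b,z,v], χ ![b,z,a]]
  have hca : ⟪c,a⟫ = 0 := by simpa using hcp 0
  have hcb : ⟪c,b⟫ = 0 := by simpa using hcp 1
  have hcz : ⟪c,z⟫ = 0 := by simpa using hcp 2
  have hcv : ⟪c,v⟫ = 0 := by simpa using hcp 3
  have hczv : ⟪c, χ ![b,z,v]⟫ = 0 := by simpa using hcp 4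
  have hcza : ⟪c, χ ![b,z,a]⟫ = 0 := by simpa using hcp 5
  have hac : ⟪a,c⟫ = 0 := by rw [real_inner_comm]; exact hca
  have hbc : ⟪b,c⟫ = 0 := by rw [real_inner_comm]; exact hcb
  have hzc : ⟪z,c⟫ = 0 := by rw [real_inner_comm]; exact hcz
  have hvc : ⟪v,c⟫ = 0 := by rw [real_inner_comm]; exact hcv
  have hc'b : ⟪χ ![b,c,z], b⟫ = 0 := chi_orth0 hχ b c z
  have hc'c : ⟪χ ![b,c,z], c⟫ = 0 := chi_orth1 hχ b c z
  have hc'a : ⟪χ ![b,c,z], a⟫ = 0 := by rw [chain_lemma hχ]; exact hcza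
  have hc'v : ⟪χ ![b,c,z], v⟫ = 0 := by rw [chain_lemma hχ]; exact hczv
  have hzz : ⟪z,z⟫ = (1:ℝ) := by rw [real_inner_self_eq_norm_sq, hz]; norm_num
  have hc'unit : ‖χ ![b,c,z]‖ = 1 :=
    norm_one_of_inner_one (by rw [chi_norm hχ hb hc1 hbc hzb hzc]; exact hzz)
  -- Step 1
  have S1 := hcond c hc1 hac hbc z (χ ![b,c,v]) hzb hzc
    (chi_orth0 hχ b c v) (chi_orth1 hχ b c v)
  rw [chi_sq hχ hb hc1 hbc hvb hvc, inner_neg_right] at S1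
  -- Step 2
  have S2 := hcond (χ ![b,c,z]) hc'unit
    (by rw [real_inner_comm]; exact hc'a) (by rw [real_inner_comm]; exact hc'b)
    c v hcb (by rw [real_inner_comm]; exact hc'c) hvb (by rw [real_inner_comm]; exact hc'v)
  rw [chi_swap12 χ b c (χ ![b,c,z]), chi_sq hχ hb hc1 hbc hzb hzc, neg_neg] at S2
  -- Step 3
  have S3 := hcond v hv (by rw [real_inner_comm]; exact hva)
    (by rw [real_inner_comm]; exact hvb) c (χ ![b,c,z]) hcb hcv hc'b hc'v
  rw [chi_swap12 χ b c v, chi_swap12 χ b (χ ![b,c,z]) v, map_neg, inner_neg_left,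
    inner_neg_right] at S3
  have hsk := hskew (χ ![b,c,v]) (χ ![b,c,z])
  linarith

private lemma keyLemma [FiniteDimensional ℝ V] (h8 : Module.finrank ℝ V = 8) (hχ : IsVCP χ)
    {R : V →ₗ[ℝ] V →ₗ[ℝ] V →ₗ[ℝ] V} {a b : V}
    (hskew : ∀ z w : V, ⟪R a b z, w⟫ = - ⟪R a b w, z⟫)
    (hcond : ∀ c : V, ‖c‖ = 1 → ⟪a,c⟫ = 0 → ⟪b,c⟫ = 0 → ∀ z v : V,
      ⟪z,b⟫ = 0 → ⟪z,c⟫ = 0 → ⟪v,b⟫ = 0 → ⟪v,c⟫ = 0 →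
      ⟪R a b (χ ![b,c,z]), v⟫ + ⟪R a b z, χ ![b,c,v]⟫ = 0)
    (ha : ‖a‖ = 1) (hb : ‖b‖ = 1) (hab : ⟪a,b⟫ = 0)
    {z v : V} (hzb : ⟪z,b⟫ = 0) (hvb : ⟪v,b⟫ = 0) :
    ⟪R a b z, v⟫ = 0 := by
  -- first, drop the unit hypotheses from caseA (keeping v ⟂ a)
  have caseA' : ∀ z' v' : V, ⟪z',b⟫ = 0 → ⟪v',a⟫ = 0 → ⟪v',b⟫ = 0 →
      ⟪R a b z', v'⟫ = 0 := by
    intro z' v' hz'b hv'a hv'b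
    rcases eq_or_ne z' 0 with rfl | hz0
    · simp
    rcases eq_or_ne v' 0 with rfl | hv0
    · simp
    have hz1 : z' = ‖z'‖ • (‖z'‖⁻¹ • z') := (smul_inv_smul₀ (norm_ne_zero_iff.mpr hz0) z').symm
    have hv1 : v' = ‖v'‖ • (‖v'‖⁻¹ • v') := (smul_inv_smul₀ (norm_ne_zero_iff.mpr hv0) v').symm
    rw [hz1, hv1, map_smul, inner_smul_left, inner_smul_right]
    have h0 : ⟪R a b (‖z'‖⁻¹ • z'), ‖v'‖⁻¹ • v'⟫ = 0 := by
      apply caseA h8 hχ hskew hcond hb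
      · exact norm_smul_inv_norm hz0
      · exact norm_smul_inv_norm hv0
      · rw [real_inner_smul_left, hz'b, mul_zero]
      · rw [real_inner_smul_left, hv'a, mul_zero]
      · rw [real_inner_smul_left, hv'b, mul_zero]
    rw [h0]; ring
  have haa : ⟪a,a⟫ = (1:ℝ) := by rw [real_inner_self_eq_norm_sq, ha]; norm_num
  -- decompose v = ⟪v,a⟫ • a + v₀
  have hv0a : ⟪v - ⟪v,a⟫ • a, a⟫ = 0 := by
    rw [inner_sub_left, real_inner_smul_left, haa]; ring
  have hv0b : ⟪v - ⟪v,a⟫ • a, b⟫ = 0 := by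
    rw [inner_sub_left, real_inner_smul_left, hab, hvb]; ring
  have hz0a : ⟪z - ⟪z,a⟫ • a, a⟫ = 0 := by
    rw [inner_sub_left, real_inner_smul_left, haa]; ring
  have hz0b : ⟪z - ⟪z,a⟫ • a, b⟫ = 0 := by
    rw [inner_sub_left, real_inner_smul_left, hab, hzb]; ring
  have hRaa : ⟪R a b a, a⟫ = 0 := by
    have := hskew a a; linarith
  have t1 : ⟪R a b z, v - ⟪v,a⟫ • a⟫ = 0 := caseA' z _ hzb hv0a hv0b
  have t2 : ⟪R a b a, z - ⟪z,a⟫ • a⟫ = 0 := caseA' a _ hab hz0a hz0b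
  have t3 : ⟪R a b z, a⟫ = 0 := by
    have h1 := hskew z a
    have h2 : ⟪R a b a, z⟫ = 0 := by
      have := t2
      rw [inner_sub_right, inner_smul_right, hRaa] at this
      linarith
    linarith
  have := t1
  rw [inner_sub_right, inner_smul_right, t3] at this
  linarith

end Core

/-- On an 8-dimensional real inner product space with a 3-fold VCP `χ`, an algebraic
curvature operator satisfying the first CR-integrability condition kills every
vector orthogonal to its two arguments, and maps `span{x,y}` into itself. -/
theorem dim8_firstCR_curvature_in_so_E {V : Type*} [NormedAddCommGroup V]
    [InnerProductSpace ℝ V] [FiniteDimensional ℝ V] (h8 : Module.finrank ℝ V = 8)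
    (χ : AlternatingMap ℝ V V (Fin 3)) (hχ : IsVCP χ)
    (R : V →ₗ[ℝ] V →ₗ[ℝ] V →ₗ[ℝ] V) (hR : IsAlgCurvature R)
    (hCR : FirstCR (m := 1) χ R) :
    (∀ x y z : V, ⟪z, x⟫ = 0 → ⟪z, y⟫ = 0 → R x y z = 0) ∧
    (∀ x y : V, ∀ w ∈ Submodule.span ℝ ({x, y} : Set V),
      R x y w ∈ Submodule.span ℝ ({x, y} : Set V)) := by
  obtain ⟨hanti, hskew, hbianchi⟩ := hR
  -- the key vanishing statement for orthonormal pairs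
  have key : ∀ a b : V, ‖a‖ = 1 → ‖b‖ = 1 → ⟪a,b⟫ = 0 → ∀ z v : V,
      ⟪z,b⟫ = 0 → ⟪v,b⟫ = 0 → ⟪R a b z, v⟫ = 0 := by
    intro a b ha hb hab z v hzb hvb
    refine keyLemma h8 hχ (fun z w => hskew a b z w) ?_ ha hb hab hzb hvb
    intro c hc hac hbc z' v' hz'b hz'c hv'b hv'c
    exact condC hχ hCR ha hb hc hab hac hbc hz'b hz'c hv'b hv'c
  -- R x x = 0
  have hRxx : ∀ x : V, R x x = 0 := by
    intro x
    have h := hanti x x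
    have h2 : R x x + R x x = 0 := by nth_rewrite 2 [h]; simp
    have h3 : (2:ℝ) • R x x = 0 := by rw [two_smul]; exact h2
    rcases smul_eq_zero.mp h3 with h4 | h4
    · norm_num at h4
    · exact h4
  -- orthonormal version of conclusion 1
  have orth : ∀ a b z : V, ‖a‖ = 1 → ‖b‖ = 1 → ⟪a,b⟫ = 0 →
      ⟪z,a⟫ = 0 → ⟪z,b⟫ = 0 → R a b z = 0 := by
    intro a b z ha hb hab hza hzb
    have hbb : ⟪b,b⟫ = (1:ℝ) := by rw [real_inner_self_eq_norm_sq, hb]; norm_num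
    have hall : ∀ v : V, ⟪R a b z, v⟫ = 0 := by
      intro v
      have hv0b : ⟪v - ⟪v,b⟫ • b, b⟫ = 0 := by
        rw [inner_sub_left, real_inner_smul_left, hbb]; ring
      have t1 : ⟪R a b z, v - ⟪v,b⟫ • b⟫ = 0 := key a b ha hb hab z _ hzb hv0b
      -- ⟪R a b z, b⟫ = 0 via Bianchi
      have t2 : ⟪R a b z, b⟫ = 0 := by
        have hbi := hbianchi a b z
        have e1 : ⟪R z a b, b⟫ = 0 := by
          have := hskew z a b b; linarith
        have e2 : ⟪R b z a, b⟫ = 0 := by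
          rcases eq_or_ne z 0 with rfl | hz0
          · simp
          have hz1 : z = ‖z‖ • (‖z‖⁻¹ • z) := (smul_inv_smul₀ (norm_ne_zero_iff.mpr hz0) z).symm
          rw [hz1, map_smul, LinearMap.smul_apply, real_inner_smul_left]
          have h0 : ⟪R b (‖z‖⁻¹ • z) a, b⟫ = 0 := by
            apply key b (‖z‖⁻¹ • z) hb (norm_smul_inv_norm hz0)
            · rw [real_inner_smul_right, real_inner_comm z b, hzb, mul_zero]
            · rw [real_inner_smul_right, real_inner_comm z a, hza, mul_zero]
            · rw [real_inner_smul_right, real_inner_comm z b, hzb, mul_zero]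
          rw [h0]; ring
        have : ⟪R a b z + R b z a + R z a b, b⟫ = ⟪(0:V), b⟫ := by rw [hbi]
        rw [inner_add_left, inner_add_left, inner_zero_left, e1, e2] at this
        linarith
      have := t1
      rw [inner_sub_right, inner_smul_right, t2] at this
      linarith
    have := hall (R a b z)
    exact inner_self_eq_zero.mp this
  -- conclusion 1 in general
  have part1 : ∀ x y z : V, ⟪z, x⟫ = 0 → ⟪z, y⟫ = 0 → R x y z = 0 := by
    intro x y z hzx hzy
    rcases eq_or_ne x 0 with rfl | hx0
    · simp
    have hxx : ⟪x,x⟫ ≠ 0 := inner_self_ne_zero.mpr hx0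
    set y' := y - (⟪y,x⟫ / ⟪x,x⟫) • x with hy'def
    have hRy : R x y = R x y' := by
      rw [hy'def, map_sub, map_smul, hRxx x, smul_zero, sub_zero]
    have hxy' : ⟪x,y'⟫ = 0 := by
      rw [hy'def, inner_sub_right, real_inner_smul_right, div_mul_cancel₀ _ hxx,
        real_inner_comm x y]
      ring
    have hzy' : ⟪z,y'⟫ = 0 := by
      rw [hy'def, inner_sub_right, real_inner_smul_right, hzx, hzy]; ring
    rcases eq_or_ne y' 0 with hy0 | hy0
    · rw [hRy, hy0, map_zero]; simp
    have hx1 : x = ‖x‖ • (‖x‖⁻¹ • x) := (smul_inv_smul₀ (norm_ne_zero_iff.mpr hx0) x).symm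
    have hy1 : y' = ‖y'‖ • (‖y'‖⁻¹ • y') := (smul_inv_smul₀ (norm_ne_zero_iff.mpr hy0) y').symm
    have h0 : R (‖x‖⁻¹ • x) (‖y'‖⁻¹ • y') z = 0 := by
      apply orth _ _ z (norm_smul_inv_norm hx0) (norm_smul_inv_norm hy0)
      · rw [real_inner_smul_left, real_inner_smul_right, hxy']; ring
      · rw [real_inner_smul_right, hzx]; ring
      · rw [real_inner_smul_right, hzy']; ring
    have h1 : (‖x‖⁻¹ * ‖y'‖⁻¹) • ((R x) y') z = 0 := by
      rw [← h0]; simp only [map_smul, LinearMap.smul_apply, smul_smul, mul_comm]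
    rw [hRy]
    rcases smul_eq_zero.mp h1 with h2 | h2
    · exact absurd h2 (mul_ne_zero (inv_ne_zero (norm_ne_zero_iff.mpr hx0))
        (inv_ne_zero (norm_ne_zero_iff.mpr hy0)))
    · exact h2
  refine ⟨part1, ?_⟩
  intro x y w hw
  have hmem : R x y w ∈ (Submodule.span ℝ ({x, y} : Set V))ᗮᗮ := by
    rw [Submodule.mem_orthogonal]
    intro u hu
    have hux : ⟪u, x⟫ = 0 := by
      rw [real_inner_comm]
      exact (Submodule.mem_orthogonal _ u).mp hu x (Submodule.subset_span (by simp))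
    have huy : ⟪u, y⟫ = 0 := by
      rw [real_inner_comm]
      exact (Submodule.mem_orthogonal _ u).mp hu y (Submodule.subset_span (by simp))
    have h0 : R x y u = 0 := part1 x y u hux huy
    have h1 : ⟪R x y w, u⟫ = - ⟪R x y u, w⟫ := hskew x y w u
    rw [h0, inner_zero_left] at h1
    rw [real_inner_comm, h1, neg_zero]
  rwa [Submodule.orthogonal_orthogonal] at hmem
end

section
/- Let V be a real inner product space of finite dimension at least 3, and let R be an algebraic curvature operator on V such that R(x,y)z = 0 whenever z is orthogonal to both x and y (equivalently, R(x,y) ∈ 𝔰𝔬(span{x,y}) for all x, y ∈ V). Then there exists λ ∈ ℝ such that R = λ R^Id. -/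
open RealInnerProductSpace

variable {V : Type*} [NormedAddCommGroup V] [InnerProductSpace ℝ V]

lemma RId_apply (x y z : V) : RId x y z = ⟪y, z⟫ • x - ⟪x, z⟫ • y := rfl

/-- Schur-type statement: on a real inner product space of finite dimension at least
3, an algebraic curvature operator with `R(x,y)z = 0` whenever `z ⊥ x` and `z ⊥ y`
is a scalar multiple of `R^Id`. -/
theorem flat_on_perp_implies_constant_curvature {V : Type*} [NormedAddCommGroup V]
    [InnerProductSpace ℝ V] [FiniteDimensional ℝ V] (hdim : 3 ≤ Module.finrank ℝ V)
    (R : V →ₗ[ℝ] V →ₗ[ℝ] V →ₗ[ℝ] V) (hR : IsAlgCurvature R)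
    (hflat : ∀ x y z : V, ⟪z, x⟫ = 0 → ⟪z, y⟫ = 0 → R x y z = 0) :
    ∃ l : ℝ, R = l • RId := by
  obtain ⟨hR1, hR2, -⟩ := hR
  set e := stdOrthonormalBasis ℝ V with he
  have hon : ∀ i j, ⟪e i, e j⟫ = if i = j then (1 : ℝ) else 0 :=
    orthonormal_iff_ite.mp (stdOrthonormalBasis ℝ V).orthonormal
  have hz : ∀ a b c, c ≠ a → c ≠ b → R (e a) (e b) (e c) = 0 := by
    intro a b c h1 h2
    exact hflat _ _ _ (by rw [hon]; simp [h1]) (by rw [hon]; simp [h2])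
  have hself : ∀ x y z : V, ⟪R x y z, z⟫ = 0 := by
    intro x y z; have := hR2 x y z z; linarith
  have hA : ∀ i j (z : V) l, l ≠ i → l ≠ j → ⟪R (e i) (e j) z, e l⟫ = 0 := by
    intro i j z l h1 h2
    have h := hR2 (e i) (e j) z (e l)
    rw [hz i j l h1 h2] at h
    simpa using h
  have hRA : ∀ x z : V, R x x z = 0 := by
    intro x z
    have h2 : R x x z = -(R x x z) := by
      conv_lhs => rw [hR1 x x]
      simp
    have h3 : (2 : ℝ) • R x x z = 0 := by
      rw [two_smul]; nth_rw 1 [h2]; abel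
    simpa using h3
  have tri : ∀ a b c, a ≠ b → a ≠ c → b ≠ c →
      R (e a) (e b) (e b) = R (e a) (e c) (e c) := by
    intro a b c hab hac hbc
    have h0 : R (e a) (e b + e c) (e b - e c) = 0 := by
      apply hflat
      · rw [inner_sub_left, hon, hon, if_neg (Ne.symm hab), if_neg (Ne.symm hac)]; ring
      · rw [inner_sub_left, inner_add_right, inner_add_right, hon, hon, hon, hon,
          if_pos rfl, if_pos rfl, if_neg hbc, if_neg (Ne.symm hbc)]; ring
    simp only [map_add, LinearMap.add_apply, map_sub] at h0
    rw [hz a b c (Ne.symm hac) (Ne.symm hbc), hz a c b (Ne.symm hab) hbc] at h0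
    have h1 : R (e a) (e b) (e b) - R (e a) (e c) (e c) = 0 := by
      rw [← h0]; abel
    exact sub_eq_zero.mp h1
  have sym : ∀ x y : V, ⟪R x y y, x⟫ = ⟪R y x x, y⟫ := by
    intro x y
    have h1 : ⟪R x y y, x⟫ = -⟪R y x y, x⟫ := by
      rw [hR1 x y]; simp
    have h2 : ⟪R y x y, x⟫ = -⟪R y x x, y⟫ := hR2 y x y x
    linarith
  have hconst : ∀ a b c d, a ≠ b → c ≠ d →
      ⟪R (e a) (e b) (e b), e a⟫ = ⟪R (e c) (e d) (e d), e c⟫ := by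
    intro a b c d hab hcd
    by_cases hca : c = a
    · subst hca
      by_cases hdb : d = b
      · subst hdb; rfl
      · rw [tri c b d hab hcd (fun h => hdb h.symm)]
    · by_cases hcb : c = b
      · subst hcb
        rw [sym (e a) (e c)]
        by_cases hda : d = a
        · subst hda; rfl
        · rw [tri c a d (Ne.symm hab) hcd (fun h => hda h.symm)]
      · rw [tri a b c hab (Ne.symm hca) (Ne.symm hcb), sym (e a) (e c)]
        by_cases hda : d = a
        · subst hda; rfl
        · rw [tri c a d hca hcd (fun h => hda h.symm)]
  obtain ⟨n, hn⟩ : ∃ n, Module.finrank ℝ V = n := ⟨_, rfl⟩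
  refine ⟨⟪R (e ⟨0, by omega⟩) (e ⟨1, by omega⟩) (e ⟨1, by omega⟩), e ⟨0, by omega⟩⟫, ?_⟩
  set i0 : Fin (Module.finrank ℝ V) := ⟨0, by omega⟩ with hi0
  set i1 : Fin (Module.finrank ℝ V) := ⟨1, by omega⟩ with hi1
  have h01 : i0 ≠ i1 := by
    intro h; rw [hi0, hi1] at h; exact absurd (congrArg Fin.val h) (by simp)
  apply e.toBasis.ext; intro i
  apply e.toBasis.ext; intro j
  apply e.toBasis.ext; intro k
  refine e.toBasis.ext_elem fun l => ?_
  simp only [OrthonormalBasis.coe_toBasis, OrthonormalBasis.coe_toBasis_repr_apply,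
    OrthonormalBasis.repr_apply_apply]
  rw [LinearMap.smul_apply, LinearMap.smul_apply, LinearMap.smul_apply, RId_apply,
    inner_smul_right, inner_sub_right, inner_smul_right, inner_smul_right,
    real_inner_comm (R (e i) (e j) (e k)) (e l)]
  rw [hon, hon, hon, hon]
  by_cases hij : i = j
  · rw [hij, hRA]
    simp
  · by_cases hkj : k = j
    · rw [hkj, if_pos rfl, if_neg hij]
      by_cases hli : l = i
      · rw [hli, if_pos rfl, hconst i j i0 i1 hij h01]
        ring
      · rw [if_neg hli]
        by_cases hlj : l = j
        · rw [hlj, hself]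
          ring
        · rw [hA i j (e j) l hli hlj, if_neg hlj]
          ring
    · by_cases hki : k = i
      · rw [hki, if_neg (fun h : j = i => hij h.symm), if_pos rfl,
          hR2 (e i) (e j) (e i) (e l)]
        by_cases hlj : l = j
        · rw [hlj, sym (e i) (e j), hconst j i i0 i1 (fun h => hij h.symm) h01,
            if_pos rfl]
          rw [if_neg (fun h : j = i => hij h.symm)]
          ring
        · by_cases hli : l = i
          · rw [hli, hself, if_pos rfl, if_neg hij]
            ring
          · rw [hz i j l hli hlj, if_neg hli, if_neg hlj]
            simp
      · rw [hz i j k hki hkj, if_neg (fun h : j = k => hkj h.symm),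
          if_neg (fun h : i = k => hki h.symm)]
        simp
end

section
/- Let V be an 8-dimensional real inner product space endowed with a 3-fold vector cross product χ, let ξ ∈ V be a unit vector, set W = ξ^⊥ and define the 2-fold vector cross product χ_ξ on W by χ_ξ(x,y) := χ(ξ,x,y). Given an algebraic curvature operator R on V, define t(R) : W × W → End(W) by t(R)(x,y) := P_W ∘ R(x,y)|_W, where P_W is the orthogonal projection of V onto W. Then t(R) is an algebraic curvature operator on W; moreover, if R satisfies the first CR-integrability condition on (V,χ) (i.e., for every orthonormal triple (w₁,w₂,w₃) in V and every z ∈ V orthogonal to both w₂ and w₃: P(R(w₁,w₂)(χ(w₂,w₃,z))) = χ(w₂,w₃, P(R(w₁,w₂)z)), with P the orthogonal projection onto span{w₂,w₃}^⊥), then t(R) satisfies the first CR-integrability condition on (W,χ_ξ) (i.e., for every orthonormal pair (w₁,w₂) in W and every z ∈ W with z ⊥ w₂: P'(t(R)(w₁,w₂)(χ_ξ(w₂,z))) = χ_ξ(w₂, P'(t(R)(w₁,w₂)z)), with P' the orthogonal projection of W onto the orthogonal complement of w₂ in W). -/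
open RealInnerProductSpace

variable {V : Type*} [NormedAddCommGroup V] [InnerProductSpace ℝ V]

section helpers

lemma mem_span_orthogonal_of {S : Set V} {v : V} (h : ∀ u ∈ S, ⟪u, v⟫ = 0) :
    v ∈ (Submodule.span ℝ S)ᗮ := by
  rw [Submodule.mem_orthogonal]
  intro u hu
  induction hu using Submodule.span_induction with
  | mem x hx => exact h x hx
  | zero => simp
  | add x y _ _ hx hy => simp [inner_add_left, hx, hy]
  | smul c x _ hx => simp [inner_smul_left, hx]

lemma projPerp_singleton [FiniteDimensional ℝ V] {e : V} (he : ⟪e, e⟫ = 1) (v : V) :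
    projPerp ({e} : Set V) v = v - ⟪e, v⟫ • e := by
  apply Submodule.eq_starProjection_of_mem_of_inner_eq_zero
  · apply mem_span_orthogonal_of
    intro u hu
    rcases hu with rfl
    simp [inner_sub_right, real_inner_smul_right, he, -inner_self_eq_norm_sq_to_K]
  · intro w hw
    have he' : ⟪e, w⟫ = 0 := by
      rw [Submodule.mem_orthogonal] at hw
      exact hw e (Submodule.subset_span (Set.mem_singleton e))
    simp [inner_sub_left, real_inner_smul_left, he']

lemma projPerp_pair_s13 [FiniteDimensional ℝ V] {e f : V} (hee : ⟪e, e⟫ = 1) (hff : ⟪f, f⟫ = 1)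
    (hef : ⟪e, f⟫ = 0) (v : V) :
    projPerp ({e, f} : Set V) v = v - ⟪e, v⟫ • e - ⟪f, v⟫ • f := by
  have hfe : ⟪f, e⟫ = 0 := by rw [real_inner_comm]; exact hef
  apply Submodule.eq_starProjection_of_mem_of_inner_eq_zero
  · apply mem_span_orthogonal_of
    intro u hu
    rcases hu with rfl | hu
    · simp [inner_sub_right, real_inner_smul_right, hee, hef, -inner_self_eq_norm_sq_to_K]
    · rcases hu with rfl
      simp [inner_sub_right, real_inner_smul_right, hff, hfe, -inner_self_eq_norm_sq_to_K]
  · intro w hw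
    rw [Submodule.mem_orthogonal] at hw
    have he' : ⟪e, w⟫ = 0 := hw e (Submodule.subset_span (by simp))
    have hf' : ⟪f, w⟫ = 0 := hw f (Submodule.subset_span (by simp))
    rw [show v - (v - ⟪e, v⟫ • e - ⟪f, v⟫ • f) = ⟪e, v⟫ • e + ⟪f, v⟫ • f by abel]
    simp [inner_add_left, real_inner_smul_left, he', hf']

lemma inner_orthogonalProjection_left_eq [FiniteDimensional ℝ V] (K : Submodule ℝ V)
    (u : V) {w : V} (hw : w ∈ K) :
    ⟪(Submodule.orthogonalProjection K u : V), w⟫ = ⟪u, w⟫ := by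
  have h := Submodule.starProjection_inner_eq_zero u w hw
  change ⟪K.starProjection u, w⟫ = ⟪u, w⟫
  rw [inner_sub_left] at h
  linarith

end helpers

set_option maxHeartbeats 1000000 in
/-- Reduction from dimension 8 to dimension 7 for the first CR-integrability
condition. Let `ξ` be a unit vector in an 8-dimensional `(V,χ)`, `W = ξᗮ`, `σ` the
2-fold VCP `χ_ξ(x,y) = χ(ξ,x,y)` on `W`, and `t(R)(x,y) = P_W ∘ R(x,y)|_W`. Then
`t(R)` is an algebraic curvature operator on `W`, and if `R` satisfies the first
CR-integrability condition on `(V,χ)` then `t(R)` satisfies it on `(W,σ)`. -/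
theorem restriction_of_algCurvature {V : Type*} [NormedAddCommGroup V]
    [InnerProductSpace ℝ V] [FiniteDimensional ℝ V] (h8 : Module.finrank ℝ V = 8)
    (χ : AlternatingMap ℝ V V (Fin 3)) (hχ : IsVCP χ)
    (ξ : V) (hξ : ‖ξ‖ = 1)
    (R : V →ₗ[ℝ] V →ₗ[ℝ] V →ₗ[ℝ] V) (hR : IsAlgCurvature R) :
    ∃ σ : AlternatingMap ℝ ↥((Submodule.span ℝ {ξ})ᗮ) ↥((Submodule.span ℝ {ξ})ᗮ) (Fin 2),
      (∀ x y : ↥((Submodule.span ℝ {ξ})ᗮ), (σ ![x, y] : V) = χ ![ξ, ↑x, ↑y]) ∧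
      ∃ S : ↥((Submodule.span ℝ {ξ})ᗮ) →ₗ[ℝ] ↥((Submodule.span ℝ {ξ})ᗮ) →ₗ[ℝ]
          ↥((Submodule.span ℝ {ξ})ᗮ) →ₗ[ℝ] ↥((Submodule.span ℝ {ξ})ᗮ),
        (∀ x y z : ↥((Submodule.span ℝ {ξ})ᗮ),
          (S x y z : V) = projPerp ({ξ} : Set V) (R ↑x ↑y ↑z)) ∧
        IsAlgCurvature S ∧
        (FirstCR (m := 1) χ R → FirstCR (m := 0) σ S) := by
  classical
  set W : Submodule ℝ V := (Submodule.span ℝ {ξ})ᗮ with hW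
  have hξξ : ⟪ξ, ξ⟫ = 1 := by
    rw [real_inner_self_eq_norm_mul_norm, hξ]; norm_num
  have hξW : ∀ u : W, ⟪ξ, (u : V)⟫ = 0 := fun u =>
    Submodule.mem_orthogonal_singleton_iff_inner_right.mp u.2
  have hWξ : ∀ u : W, ⟪(u : V), ξ⟫ = 0 := fun u => by
    rw [real_inner_comm]; exact hξW u
  -- projection coercion formula
  have hprojW : ∀ v : V, ((Submodule.orthogonalProjection W v : W) : V) = v - ⟪ξ, v⟫ • ξ := fun v =>
    projPerp_singleton hξξ v
  -- sigma
  let projL : V →ₗ[ℝ] W := (Submodule.orthogonalProjection W).toLinearMap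
  let σ : AlternatingMap ℝ W W (Fin 2) :=
    projL.compAlternatingMap ((χ.curryLeft ξ).compLinearMap W.subtype)
  have hσmem : ∀ x y : V, χ ![ξ, x, y] ∈ W := by
    intro x y
    apply Submodule.mem_orthogonal_singleton_iff_inner_right.mpr
    rw [real_inner_comm]
    simpa using hχ.1 ![ξ, x, y] 0
  have hσ : ∀ x y : W, (σ ![x, y] : V) = χ ![ξ, ↑x, ↑y] := by
    intro x y
    have harg : (Fin.cons ξ (W.subtype ∘ ![x, y]) : Fin 3 → V) = ![ξ, ↑x, ↑y] := by
      ext i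
      fin_cases i <;> rfl
    show ((Submodule.orthogonalProjection W (χ (Fin.cons ξ (W.subtype ∘ ![x, y]))) : W) : V) = _
    rw [harg]; exact Submodule.starProjection_eq_self_iff.mpr (hσmem x y)
  -- S
  let S : W →ₗ[ℝ] W →ₗ[ℝ] W →ₗ[ℝ] W :=
    LinearMap.mk₂ ℝ (fun x y => projL ∘ₗ (R ↑x ↑y) ∘ₗ W.subtype)
      (fun x x' y => by ext z; simp [projL])
      (fun c x y => by ext z; simp [projL])
      (fun x y y' => by ext z; simp [projL])
      (fun c x y => by ext z; simp [projL])
  have hSapp : ∀ x y z : W, S x y z = Submodule.orthogonalProjection W (R ↑x ↑y ↑z) := fun x y z => rfl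
  have hS : ∀ x y z : W, (S x y z : V) = projPerp ({ξ} : Set V) (R ↑x ↑y ↑z) := by
    intro x y z
    rfl
  have hSV : ∀ x y z : W, (S x y z : V) = R ↑x ↑y ↑z - ⟪ξ, R ↑x ↑y ↑z⟫ • ξ := by
    intro x y z
    rw [hSapp, hprojW]
  refine ⟨σ, hσ, S, hS, ⟨?_, ?_, ?_⟩, ?_⟩
  · -- antisymmetry
    intro x y
    ext z
    simp only [LinearMap.neg_apply, Submodule.coe_neg, hSV]
    rw [hR.1 (↑x : V) ↑y]
    simp only [LinearMap.neg_apply, inner_neg_right, neg_smul, neg_sub, sub_neg_eq_add]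
    abel
  · -- skew-adjoint
    intro x y z w
    have h1 : ⟪S x y z, w⟫ = ⟪R ↑x ↑y ↑z, (w : V)⟫ := by
      rw [show (⟪S x y z, w⟫ : ℝ) = ⟪(S x y z : V), (w : V)⟫ from rfl, hSapp]
      exact inner_orthogonalProjection_left_eq W _ w.2
    have h2 : ⟪S x y w, z⟫ = ⟪R ↑x ↑y ↑w, (z : V)⟫ := by
      rw [show (⟪S x y w, z⟫ : ℝ) = ⟪(S x y w : V), (z : V)⟫ from rfl, hSapp]
      exact inner_orthogonalProjection_left_eq W _ z.2
    rw [h1, h2]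
    exact hR.2.1 ↑x ↑y ↑z ↑w
  · -- Bianchi
    intro x y z
    apply Subtype.coe_injective
    have := hR.2.2 (↑x : V) ↑y ↑z
    simp only [Submodule.coe_add, hSV, Submodule.coe_zero]
    rw [show (R ↑x ↑y ↑z - ⟪ξ, R ↑x ↑y ↑z⟫ • ξ) + (R ↑y ↑z ↑x - ⟪ξ, R ↑y ↑z ↑x⟫ • ξ)
        + (R ↑z ↑x ↑y - ⟪ξ, R ↑z ↑x ↑y⟫ • ξ)
        = (R ↑x ↑y ↑z + R ↑y ↑z ↑x + R ↑z ↑x ↑y)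
          - (⟪ξ, R ↑x ↑y ↑z⟫ + ⟪ξ, R ↑y ↑z ↑x⟫ + ⟪ξ, R ↑z ↑x ↑y⟫) • ξ by
      simp [add_smul]; abel]
    rw [this]
    rw [show (⟪ξ, R ↑x ↑y ↑z⟫ + ⟪ξ, R ↑y ↑z ↑x⟫ + ⟪ξ, R ↑z ↑x ↑y⟫ : ℝ)
        = ⟪ξ, R ↑x ↑y ↑z + R ↑y ↑z ↑x + R ↑z ↑x ↑y⟫ by simp [inner_add_right]]
    rw [this]
    simp
  · -- FirstCR
    intro h1 w hw z hz
    have hwite := orthonormal_iff_ite.mp hw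
    set w0 : V := ↑(w 0) with hw0
    set w1 : V := ↑(w 1) with hw1
    have h00 : ⟪w0, w0⟫ = 1 := by simpa [Submodule.coe_inner] using hwite 0 0
    have h11 : ⟪w1, w1⟫ = 1 := by simpa [Submodule.coe_inner] using hwite 1 1
    have h01 : ⟪w0, w1⟫ = 0 := by simpa [Submodule.coe_inner] using hwite 0 1
    have h10 : ⟪w1, w0⟫ = 0 := by simpa [Submodule.coe_inner] using hwite 1 0
    have h11W : ⟪w 1, w 1⟫ = (1 : ℝ) := by simpa using hwite 1 1
    have ht : Fin.tail w = ![w 1] := by ext i; fin_cases i <;> rfl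
    have hz1 : ⟪(z : V), w1⟫ = 0 := by
      have := hz 0
      rw [ht] at this
      simpa [Submodule.coe_inner] using this
    have hξ0 : ⟪ξ, w0⟫ = 0 := hξW (w 0)
    have hξ1 : ⟪ξ, w1⟫ = 0 := hξW (w 1)
    have h0ξ : ⟪w0, ξ⟫ = 0 := hWξ (w 0)
    have h1ξ' : ⟪w1, ξ⟫ = 0 := hWξ (w 1)
    have hworth : Orthonormal ℝ (![w0, w1, ξ]) := by
      rw [orthonormal_iff_ite]
      intro i j
      fin_cases i <;> fin_cases j <;>
        simp [h00, h01, h10, h11, hξξ, hξ0, hξ1, h0ξ, h1ξ', -inner_self_eq_norm_sq_to_K]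
    have httail : Fin.tail ![w0, w1, ξ] = ![w1, ξ] := by ext i; fin_cases i <;> rfl
    have hz' : ∀ i : Fin 2, ⟪(z : V), Fin.tail ![w0, w1, ξ] i⟫ = 0 := by
      intro i
      rw [httail]
      fin_cases i
      · simpa using hz1
      · simpa using hWξ z
    have key := h1 ![w0, w1, ξ] hworth ↑z hz'
    have hsnoc : ∀ u : V, (Fin.snoc (![w1, ξ]) u : Fin 3 → V) = ![w1, ξ, u] := by
      intro u; ext i; fin_cases i <;> rfl
    rw [httail] at key
    rw [hsnoc, hsnoc, Matrix.range_cons_cons_empty] at key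
    simp only [Matrix.cons_val_zero, Matrix.cons_val_one, Matrix.head_cons] at key
    have h1ξ : ⟪w1, ξ⟫ = 0 := hWξ (w 1)
    -- swap lemma
    have hswap : ∀ c : V, χ ![w1, ξ, c] = - χ ![ξ, w1, c] := by
      intro c
      have hcomp : (![ξ, w1, c] ∘ Equiv.swap (0 : Fin 3) 1) = ![w1, ξ, c] := by
        ext i; fin_cases i <;> simp [Equiv.swap_apply_def]
      rw [← hcomp, AlternatingMap.map_swap _ _ (by decide)]
    rw [hswap, hswap, map_neg] at key
    simp only [projPerp_pair_s13 h11 hξξ h1ξ] at key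
    -- clean up key
    set A : V := χ ![ξ, w1, (z : V)] with hA
    set Ra : V := R w0 w1 A with hRa
    set Rz : V := R w0 w1 ↑z with hRz
    have key2 : Ra - ⟪ξ, Ra⟫ • ξ - ⟪w1, Ra⟫ • w1
        = χ ![ξ, w1, Rz - ⟪ξ, Rz⟫ • ξ - ⟪w1, Rz⟫ • w1] := by
      have e1 : Rz - ⟪ξ, Rz⟫ • ξ - ⟪w1, Rz⟫ • w1 = Rz - ⟪w1, Rz⟫ • w1 - ⟪ξ, Rz⟫ • ξ :=
        sub_right_comm _ _ _
      rw [e1]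
      apply neg_injective
      rw [show -(Ra - ⟪ξ, Ra⟫ • ξ - ⟪w1, Ra⟫ • w1)
            = -Ra - ⟪w1, -Ra⟫ • w1 - ⟪ξ, -Ra⟫ • ξ by
          simp only [inner_neg_right, neg_smul]; abel]
      rw [key]
    -- now transform the goal
    have htW : Fin.tail w = ![w 1] := ht
    rw [htW]
    have hsnocW : ∀ u : W, (Fin.snoc (![w 1]) u : Fin 2 → W) = ![w 1, u] := by
      intro u; ext i; fin_cases i <;> rfl
    rw [hsnocW, hsnocW, Matrix.range_cons_empty]
    simp only [projPerp_singleton h11W]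
    apply Subtype.coe_injective
    simp only [Submodule.coe_sub, Submodule.coe_smul, Submodule.coe_inner, hSV, hσ]
    rw [show ⟪w1, R w0 w1 (χ ![ξ, w1, ↑z]) - ⟪ξ, R w0 w1 (χ ![ξ, w1, ↑z])⟫ • ξ⟫
        = ⟪w1, Ra⟫ by
      simp [inner_sub_right, real_inner_smul_right, h1ξ, hRa, hA]]
    rw [show ⟪w1, Rz - ⟪ξ, Rz⟫ • ξ⟫ = ⟪w1, Rz⟫ by
      simp [inner_sub_right, real_inner_smul_right, h1ξ]]
    exact key2
end
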